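/- arXiv:1712.00496 — 2 statements merged into one kernel-verified Lean document; each statement's English description precedes it below -/
import Mathlib

section
/- In the Baumslag–Solitar group BS(1,n) ≅ ℤ[1/n] ⋊ ℤ (with ℤ acting by multiplication by n), the commensurator of the subgroup generated by the element 1/n of ℤ[1/n] is the whole group. -/
open IsLocalization

/-- The ring `ℤ[1/n]`, realized as the localization of `ℤ` away from `n`. -/
abbrev ZInvN (n : ℤ) := Localization.Away n

/-- Multiplication by `n` as a unit of `ℤ[1/n]`. -/
noncomputable def mulByN (n : ℤ) : (ZInvN n)ˣ :=
  (IsLocalization.Away.algebraMap_isUnit (S := ZInvN n) n).unit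

/-- The action of `ℤ` on the additive group `ℤ[1/n]` where the generator acts by
multiplication by `n`, packaged as a homomorphism to the automorphism group. -/
noncomputable def bsAction (n : ℤ) :
    Multiplicative ℤ →* MulAut (Multiplicative (ZInvN n)) :=
  zpowersHom _ (AddEquiv.toMultiplicative (AddAut.mulLeft (mulByN n)))

/-- The Baumslag–Solitar group `BS(1,n) ≅ ℤ[1/n] ⋊ ℤ`. -/
abbrev BS1n (n : ℤ) := SemidirectProduct (Multiplicative (ZInvN n)) (Multiplicative ℤ) (bsAction n)

/-- The element `1/n ∈ ℤ[1/n] ⊆ BS(1,n)`. -/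
noncomputable def oneOverN (n : ℤ) : BS1n n :=
  SemidirectProduct.inl (Multiplicative.ofAdd (IsLocalization.Away.invSelf (S := ZInvN n) n))

/-- Key index lemma: `⟨g^m⟩` is commensurable with `⟨g⟩` for `m > 0`. -/
lemma commensurable_zpowers_zpow {G : Type*} [Group G] (g : G) (m : ℤ) (hm : 0 < m) :
    Subgroup.Commensurable (Subgroup.zpowers (g ^ m)) (Subgroup.zpowers g) := by
  have hle : Subgroup.zpowers (g ^ m) ≤ Subgroup.zpowers g :=
    Subgroup.zpowers_le.2 (Subgroup.zpow_mem _ (Subgroup.mem_zpowers g) m)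
  constructor
  · -- finite index of ⟨g^m⟩ in ⟨g⟩
    set K := Subgroup.zpowers g with hK
    set H := (Subgroup.zpowers (g ^ m)).subgroupOf K with hH
    set k : K := ⟨g, Subgroup.mem_zpowers g⟩ with hk
    have : Finite (K ⧸ H) := by
      apply Finite.of_surjective
        (fun i : Fin m.toNat => QuotientGroup.mk (k ^ (i : ℕ)))
      intro q
      obtain ⟨x, rfl⟩ := QuotientGroup.mk_surjective q
      obtain ⟨j, hj⟩ := Subgroup.mem_zpowers_iff.mp x.2
      have hx : x = k ^ j := by
        ext; simpa using hj.symm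
      have hr0 : 0 ≤ j % m := Int.emod_nonneg j hm.ne'
      have hrm : j % m < m := Int.emod_lt_of_pos j hm
      refine ⟨⟨(j % m).toNat, by omega⟩, ?_⟩
      have hcast : ((j % m).toNat : ℤ) = j % m := Int.toNat_of_nonneg hr0
      simp only [hx]
      rw [QuotientGroup.eq]
      have : (k ^ (((j % m).toNat : ℕ)))⁻¹ * k ^ j = k ^ (j - j % m) := by
        rw [← zpow_natCast, hcast, ← zpow_neg, ← zpow_add]
        ring_nf
      rw [this]
      have hdiv : j - j % m = m * (j / m) := by
        have := Int.emod_add_mul_ediv j m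
        linarith
      rw [Subgroup.mem_subgroupOf]
      show (g : G) ^ (j - j % m) ∈ Subgroup.zpowers (g ^ m)
      rw [hdiv, zpow_mul]
      exact Subgroup.zpow_mem _ (Subgroup.mem_zpowers _) _
    exact Subgroup.index_ne_zero_of_finite
  · rw [Subgroup.relIndex_eq_one.2 hle]
    exact one_ne_zero

open Pointwise in
lemma conj_smul_zpowers {G : Type*} [Group G] (g h : G) :
    ConjAct.toConjAct g • Subgroup.zpowers h = Subgroup.zpowers (g * h * g⁻¹) := by
  rw [Subgroup.pointwise_smul_def]
  refine (MonoidHom.map_zpowers _ h).trans ?_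
  congr 1

lemma bsAction_apply (n : ℤ) (k : ℤ) (x : ZInvN n) :
    bsAction n (Multiplicative.ofAdd k) (Multiplicative.ofAdd x)
      = Multiplicative.ofAdd ((((mulByN n) ^ k : (ZInvN n)ˣ) : ZInvN n) * x) := by
  set e := AddEquiv.toMultiplicative (AddAut.mulLeft (mulByN n)) with he
  have key : ∀ (j : ℤ) (y : ZInvN n), (e ^ j) (Multiplicative.ofAdd y)
      = Multiplicative.ofAdd ((((mulByN n) ^ j : (ZInvN n)ˣ) : ZInvN n) * y) := by
    have hone : ∀ y : ZInvN n, e (Multiplicative.ofAdd y)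
        = Multiplicative.ofAdd (((mulByN n : (ZInvN n)ˣ) : ZInvN n) * y) := by
      intro y; rfl
    have hinv : ∀ y : ZInvN n, e⁻¹ (Multiplicative.ofAdd y)
        = Multiplicative.ofAdd ((((mulByN n)⁻¹ : (ZInvN n)ˣ) : ZInvN n) * y) := by
      intro y
      apply e.injective
      rw [hone]
      show e (e⁻¹ (Multiplicative.ofAdd y)) = _
      rw [MulAut.apply_inv_self]
      congr 1
      rw [← mul_assoc]
      simp
    intro j
    induction j using Int.induction_on with
    | zero => intro y; simp
    | succ i ih =>
        intro y
        have : e ^ ((i : ℤ) + 1) = e ^ (i : ℤ) * e := by rw [zpow_add_one]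
        rw [this]
        show (e ^ (i : ℤ)) (e (Multiplicative.ofAdd y)) = _
        rw [hone, ih]
        congr 1
        rw [zpow_add_one, Units.val_mul, mul_assoc]
    | pred i ih =>
        intro y
        have : e ^ (-(i : ℤ) - 1) = e ^ (-(i : ℤ)) * e⁻¹ := by rw [zpow_sub_one]
        rw [this]
        show (e ^ (-(i : ℤ))) (e⁻¹ (Multiplicative.ofAdd y)) = _
        rw [hinv, ih]
        congr 1
        rw [zpow_sub_one, Units.val_mul, mul_assoc]
  have : bsAction n (Multiplicative.ofAdd k) = e ^ k := rfl
  rw [this, key]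

/-- In `BS(1,n) ≅ ℤ[1/n] ⋊ ℤ`, the commensurator of the cyclic subgroup generated
by the element `1/n` of `ℤ[1/n]` is the whole group. -/
theorem commensurator_oneOverN_eq_top (n : ℤ) (hn : 0 < n) :
    Subgroup.Commensurable.commensurator (Subgroup.zpowers (oneOverN n)) = ⊤ := by
  rw [eq_top_iff]
  intro g _
  rw [← SemidirectProduct.inl_left_mul_inr_right g]
  refine Subgroup.mul_mem _ ?_ ?_
  · -- elements of ℤ[1/n] centralize the subgroup
    rw [Subgroup.Commensurable.commensurator_mem_iff, conj_smul_zpowers]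
    have : SemidirectProduct.inl g.left * oneOverN n * (SemidirectProduct.inl g.left)⁻¹
        = oneOverN n := by
      rw [oneOverN, ← map_inv, ← map_mul, ← map_mul, mul_comm g.left, mul_assoc,
        mul_inv_cancel, mul_one]
    rw [this]
  · rw [Subgroup.Commensurable.commensurator_mem_iff, conj_smul_zpowers]
    set a := IsLocalization.Away.invSelf (S := ZInvN n) n with ha
    set k := Multiplicative.toAdd g.right with hk
    have hgr : g.right = Multiplicative.ofAdd k := rfl
    have hconj : SemidirectProduct.inr (φ := bsAction n) g.right * oneOverN n *
        (SemidirectProduct.inr g.right)⁻¹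
        = SemidirectProduct.inl (bsAction n g.right (Multiplicative.ofAdd a)) := by
      rw [oneOverN, ← map_inv, SemidirectProduct.inl_aut]
    rw [hconj, hgr, bsAction_apply]
    -- now split on the sign of k
    rcases le_or_gt 0 k with hk0 | hk0
    · -- k ≥ 0 : the conjugate generator is (oneOverN n) ^ (n ^ k)
      set m := k.toNat with hm
      have hkm : k = (m : ℤ) := (Int.toNat_of_nonneg hk0).symm
      have hu : ((mulByN n ^ k : (ZInvN n)ˣ) : ZInvN n) * a = ((n ^ m : ℤ) : ZInvN n) * a := by
        rw [hkm, zpow_natCast, Units.val_pow_eq_pow_val]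
        norm_cast
        congr 1
        show ((algebraMap ℤ (ZInvN n)) n) ^ m = _
        rw [← map_pow]
        simp [algebraMap_int_eq]
      rw [hu, ← zsmul_eq_mul, ofAdd_zsmul, map_zpow]
      exact commensurable_zpowers_zpow (oneOverN n) (n ^ m) (pow_pos hn m)
    · -- k < 0 : the original generator is a power of the conjugate one
      set m := (-k).toNat with hm
      have hkm : k = -(m : ℤ) := by omega
      set b : ZInvN n := ((mulByN n ^ k : (ZInvN n)ˣ) : ZInvN n) * a with hb
      have hab : a = ((n ^ m : ℤ) : ZInvN n) * b := by
        rw [hb, ← mul_assoc]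
        have : ((n ^ m : ℤ) : ZInvN n) = ((mulByN n ^ (m : ℤ) : (ZInvN n)ˣ) : ZInvN n) := by
          rw [zpow_natCast, Units.val_pow_eq_pow_val]
          norm_cast
          show _ = ((algebraMap ℤ (ZInvN n)) n) ^ m
          rw [← map_pow]
          simp [algebraMap_int_eq]
        rw [this, ← Units.val_mul, ← zpow_add, hkm]
        simp
      have hgen : oneOverN n = (SemidirectProduct.inl (φ := bsAction n)
          (Multiplicative.ofAdd b)) ^ (n ^ m : ℤ) := by
        rw [oneOverN, ← map_zpow, ← ofAdd_zsmul, zsmul_eq_mul, ← hab]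
      rw [hgen]
      exact (commensurable_zpowers_zpow _ (n ^ m) (pow_pos hn m)).symm
end

section
/- Let G be a group, Q a quotient of G by a normal subgroup N, and suppose g ∈ G has image of infinite order in Q. If H = ⟨g⟩ and the commensurator of ⟨image of g⟩ in Q equals the normalizer of image of g in Q, then the preimage in G of the normalizer N_Q(image of g) contains the commensurator N_G[H]. -/
open Subgroup Pointwise

/-- `⟨a^n⟩` has finite index in `⟨a⟩` for `n > 0`. -/
lemma aux_relindex_zpowers_pow {Q : Type*} [Group Q] (a : Q) {n : ℕ} (hn : 0 < n) :
    (Subgroup.zpowers (a ^ n)).relIndex (Subgroup.zpowers a) ≠ 0 := by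
  haveI : NeZero n := ⟨hn.ne'⟩
  have hfin : Finite ((Subgroup.zpowers a) ⧸
      (Subgroup.zpowers (a ^ n)).subgroupOf (Subgroup.zpowers a)) := by
    refine Finite.of_surjective
      (fun k : ZMod n => QuotientGroup.mk
        ((⟨a, Subgroup.mem_zpowers a⟩ : Subgroup.zpowers a) ^ (k.val))) ?_
    intro q
    induction q using QuotientGroup.induction_on with
    | H x =>
      obtain ⟨m, hm⟩ := Subgroup.mem_zpowers_iff.mp x.2
      refine ⟨(m : ZMod n), ?_⟩
      rw [QuotientGroup.eq]
      rw [Subgroup.mem_subgroupOf]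
      have hdvd : (n : ℤ) ∣ m - (((m : ZMod n).val : ℤ)) := by
        rw [← ZMod.intCast_zmod_eq_zero_iff_dvd]
        push_cast
        simp [ZMod.natCast_val, ZMod.cast_id]
      obtain ⟨t, ht⟩ := hdvd
      rw [Subgroup.mem_zpowers_iff]
      refine ⟨t, ?_⟩
      have h2 : ((a ^ n) ^ t : Q) = a ^ (m - (((m : ZMod n).val : ℤ))) := by
        rw [← zpow_natCast a n, ← zpow_mul, ht]
      show ((a ^ n) ^ t : Q) =
        ((((⟨a, Subgroup.mem_zpowers a⟩ : Subgroup.zpowers a) ^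
          ((m : ZMod n).val))⁻¹ * x : Subgroup.zpowers a) : Q)
      push_cast
      rw [h2, ← hm, zpow_sub, zpow_natCast]
      group
  exact Subgroup.index_ne_zero_of_finite

/-- If `c^m = a^n` with `m ≠ 0`, `n > 0`, then `⟨c⟩` and `⟨a⟩` are commensurable. -/
lemma aux_commensurable_of_zpow_eq {Q : Type*} [Group Q] {a c : Q} {m : ℤ} {n : ℕ}
    (hm : m ≠ 0) (hn : 0 < n) (h : c ^ m = a ^ n) :
    Commensurable (Subgroup.zpowers c) (Subgroup.zpowers a) := by
  constructor
  · -- (zpowers c).relindex (zpowers a) ≠ 0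
    have hle : Subgroup.zpowers (a ^ n) ≤ Subgroup.zpowers c := by
      rw [Subgroup.zpowers_le, Subgroup.mem_zpowers_iff]
      exact ⟨m, h⟩
    exact fun h0 => aux_relindex_zpowers_pow a hn
      (Subgroup.relIndex_eq_zero_of_le_left hle h0)
  · -- (zpowers a).relindex (zpowers c) ≠ 0
    have hpos : 0 < m.natAbs := Int.natAbs_pos.mpr hm
    have hle : Subgroup.zpowers (c ^ m.natAbs) ≤ Subgroup.zpowers a := by
      rw [Subgroup.zpowers_le, Subgroup.mem_zpowers_iff]
      rcases Int.natAbs_eq m with he | he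
      · refine ⟨(n : ℤ), ?_⟩
        rw [zpow_natCast, ← h, ← zpow_natCast c m.natAbs, ← he]
      · refine ⟨-(n : ℤ), ?_⟩
        rw [zpow_neg, zpow_natCast, ← h, ← zpow_neg, ← zpow_natCast c m.natAbs]
        congr 1
        omega
    exact fun h0 => aux_relindex_zpowers_pow c hpos
      (Subgroup.relIndex_eq_zero_of_le_left hle h0)

lemma aux_conj_zpow {Q : Type*} [Group Q] (u a : Q) (k : ℤ) :
    (u * a * u⁻¹) ^ k = u * a ^ k * u⁻¹ := by
  rw [← MulAut.conj_apply, ← map_zpow, MulAut.conj_apply]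

lemma aux_conj_smul_zpowers {Q : Type*} [Group Q] (u a : Q) :
    ConjAct.toConjAct u • Subgroup.zpowers a = Subgroup.zpowers (u * a * u⁻¹) := by
  ext y
  rw [Subgroup.mem_pointwise_smul_iff_inv_smul_mem]
  have hs : (ConjAct.toConjAct u)⁻¹ • y = u⁻¹ * y * u := by
    rw [← ConjAct.toConjAct_inv, ConjAct.toConjAct_smul]
    group
  rw [hs, Subgroup.mem_zpowers_iff, Subgroup.mem_zpowers_iff]
  constructor
  · rintro ⟨k, hk⟩
    refine ⟨k, ?_⟩
    rw [aux_conj_zpow, hk]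
    group
  · rintro ⟨k, hk⟩
    refine ⟨k, ?_⟩
    rw [← hk, aux_conj_zpow]
    group

/-- Let `Q` be a quotient of `G` via the surjection `π`, and let `g ∈ G` have image
of infinite order in `Q`. If the commensurator of `⟨π g⟩` in `Q` equals the
normalizer of `⟨π g⟩` in `Q`, then the preimage in `G` of the normalizer
`N_Q(π g)` contains the commensurator `N_G[⟨g⟩]`. -/
theorem commensurator_le_comap_normalizer {G Q : Type*} [Group G] [Group Q]
    (π : G →* Q) (hπ : Function.Surjective π) (g : G)
    (hinf : ¬ IsOfFinOrder (π g))
    (hQ : Subgroup.Commensurable.commensurator (Subgroup.zpowers (π g)) =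
      Subgroup.normalizer (Subgroup.zpowers (π g) : Set Q)) :
    Subgroup.Commensurable.commensurator (Subgroup.zpowers g) ≤
      (Subgroup.normalizer (Subgroup.zpowers (π g) : Set Q)).comap π := by
  intro x hx
  rw [Subgroup.mem_comap, ← hQ]
  rw [Commensurable.commensurator_mem_iff] at hx ⊢
  -- extract g^n = x g^m x⁻¹
  have h1 : (ConjAct.toConjAct x • Subgroup.zpowers g).relIndex (Subgroup.zpowers g) ≠ 0 :=
    hx.1
  obtain ⟨n, hn0, -, hmem⟩ :=
    Subgroup.exists_pow_mem_of_relIndex_ne_zero h1 (Subgroup.mem_zpowers g)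
  have hmem1 : g ^ n ∈ ConjAct.toConjAct x • Subgroup.zpowers g := hmem.1
  rw [aux_conj_smul_zpowers, Subgroup.mem_zpowers_iff] at hmem1
  obtain ⟨m, hm⟩ := hmem1
  -- push to Q
  have key : (π x * π g * (π x)⁻¹) ^ m = (π g) ^ n := by
    have h2 := congrArg π hm
    rw [map_zpow, map_mul, map_mul, map_inv, map_pow] at h2
    exact h2
  have hmne : m ≠ 0 := by
    rintro rfl
    apply hinf
    refine isOfFinOrder_iff_pow_eq_one.mpr ⟨n, hn0, ?_⟩
    rw [← key]
    simp
  rw [aux_conj_smul_zpowers]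
  exact aux_commensurable_of_zpow_eq hmne hn0 key
end
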